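/- Let p be a prime and let a, b, c be natural numbers not divisible by p. Then the matrix M is numerically p-self-similar modulo p; that is, for all s, t with 0 ≤ s, t < p, all k ≥ 0, and all i, j < p^k, we have M[s·p^k + i, t·p^k + j] ≡ M[s,t] · M[i,j] (mod p). -/

import Mathlib

/-- The matrix `M` from Definition 4.1: `M[0,0] = 1`, `M[0,j] = a^j` for `j > 0`,
`M[i,0] = c^i` for `i > 0`, and `M[i,j] = a*M[i,j-1] + b*M[i-1,j-1] + c*M[i-1,j]`
for `i, j > 0`. -/
def M (a b c : ℕ) : ℕ → ℕ → ℕ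
  | 0, 0 => 1
  | 0, j + 1 => a ^ (j + 1)
  | i + 1, 0 => c ^ (i + 1)
  | i + 1, j + 1 =>
      a * M a b c (i + 1) j + b * M a b c i j + c * M a b c i (j + 1)
  termination_by i j => i + j

lemma M_zero_row (a b c j : ℕ) : M a b c 0 j = a ^ j := by cases j <;> simp [M]
lemma M_zero_col (a b c i : ℕ) : M a b c i 0 = c ^ i := by cases i <;> simp [M]
lemma M_rec (a b c i j : ℕ) :
    M a b c (i+1) (j+1) = a * M a b c (i+1) j + b * M a b c i j + c * M a b c i (j+1) := by
  rw [M]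

/-- term of the closed-form sum -/
def Mt (a b c i j k : ℕ) : ℕ :=
  Nat.choose i k * Nat.choose (i + j - k) i * a ^ (j - k) * b ^ k * c ^ (i - k)

lemma Mt_zero (a b c i j : ℕ) :
    Mt a b c (i+1) (j+1) 0 = a * Mt a b c (i+1) j 0 + c * Mt a b c i (j+1) 0 := by
  simp only [Mt, Nat.choose_zero_right, Nat.sub_zero, pow_zero]
  rw [show i+1+(j+1) = (i+j+1)+1 by omega, show i+1+j = i+j+1 by omega,
    show i+(j+1) = i+j+1 by omega, Nat.choose_succ_succ (i+j+1) i]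
  ring

lemma Mt_key (a b c i j k : ℕ) (hk : k ≤ i) :
    Mt a b c (i+1) (j+1) (k+1) =
      a * Mt a b c (i+1) j (k+1) + b * Mt a b c i j k + c * Mt a b c i (j+1) (k+1) := by
  rcases lt_trichotomy k j with hkj | rfl | hkj
  · -- k < j
    obtain ⟨d, rfl⟩ : ∃ d, j = k + d + 1 := ⟨j - k - 1, by omega⟩
    rcases eq_or_lt_of_le hk with rfl | hki
    · -- k = i
      simp only [Mt]
      simp only [show k+1+(k+d+1+1)-(k+1) = (k+d+1)+1 by omega,
        show k+d+1+1-(k+1) = d+1 by omega,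
        show k+1+(k+d+1)-(k+1) = k+d+1 by omega,
        show k+d+1-(k+1) = d by omega,
        show k+(k+d+1)-k = k+d+1 by omega,
        show k+d+1-k = d+1 by omega,
        show k+(k+d+1+1)-(k+1) = k+d+1 by omega,
        show k+1-(k+1) = 0 by omega, show k-k = 0 by omega,
        show k-(k+1) = 0 by omega]
      rw [Nat.choose_succ_succ (k+d+1) k, Nat.choose_self, Nat.choose_succ_self]
      ring_nf
      simp [Nat.choose_self, Nat.succ_eq_add_one, Nat.add_comm]
      ring_nf
    · -- k < i
      obtain ⟨e, rfl⟩ : ∃ e, i = k + e + 1 := ⟨i - k - 1, by omega⟩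
      simp only [Mt]
      simp only [show k+e+1+1+(k+d+1+1)-(k+1) = (k+e+d+2)+1 by omega,
        show k+d+1+1-(k+1) = d+1 by omega,
        show k+e+1+1-(k+1) = e+1 by omega,
        show k+e+1+1+(k+d+1)-(k+1) = k+e+d+2 by omega,
        show k+d+1-(k+1) = d by omega,
        show k+e+1+(k+d+1)-k = k+e+d+2 by omega,
        show k+d+1-k = d+1 by omega,
        show k+e+1-k = e+1 by omega,
        show k+e+1+(k+d+1+1)-(k+1) = k+e+d+2 by omega,
        show k+e+1-(k+1) = e by omega,
        show k+e+1+1 = (k+e+1)+1 from rfl,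
        show k+e+d+2+1 = (k+e+d+2)+1 from rfl]
      rw [Nat.choose_succ_succ (k+e+1) k,
        Nat.choose_succ_succ (k+e+d+2) (k+e+1)]
      ring
  · -- k = j
    rcases eq_or_lt_of_le hk with rfl | hki
    · simp only [Mt]
      simp only [show k+1+(k+1)-(k+1) = k+1 by omega,
        show k+1-(k+1) = 0 by omega,
        show k+1+k-(k+1) = k by omega,
        show k+k-k = k by omega, show k-k = 0 by omega,
        show k+(k+1)-(k+1) = k by omega, show k-(k+1) = 0 by omega]
      rw [Nat.choose_self, Nat.choose_succ_self]
      simp [Nat.choose_eq_zero_of_lt (show k < k+1 by omega)]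
      ring
    · obtain ⟨e, rfl⟩ : ∃ e, i = k + e + 1 := ⟨i - k - 1, by omega⟩
      simp only [Mt]
      simp only [show k+e+1+1+(k+1)-(k+1) = k+e+2 by omega,
        show k+1-(k+1) = 0 by omega,
        show k+e+1+1-(k+1) = e+1 by omega,
        show k+e+1+1+k-(k+1) = k+e+1 by omega,
        show k-(k+1) = 0 by omega,
        show k+e+1+k-k = k+e+1 by omega,
        show k-k = 0 by omega,
        show k+e+1-k = e+1 by omega,
        show k+e+1+(k+1)-(k+1) = k+e+1 by omega,
        show k+e+1-(k+1) = e by omega,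
        show k+e+2 = (k+e+1)+1 from rfl,
        show k+e+1+1 = (k+e+1)+1 from rfl]
      rw [Nat.choose_succ_succ (k+e+1) k, Nat.choose_self,
        Nat.choose_eq_zero_of_lt (show k+e+1 < (k+e+1)+1 by omega)]
      ring_nf
      simp [Nat.choose_self, Nat.succ_eq_add_one, Nat.add_comm]
      ring_nf
  · -- k > j : everything vanishes
    have h1 : (i+1)+(j+1)-(k+1) < i+1 := by omega
    have h2 : (i+1)+j-(k+1) < i+1 := by omega
    have h3 : i+j-k < i := by omega
    have h4 : i+(j+1)-(k+1) < i := by omega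
    simp [Mt, Nat.choose_eq_zero_of_lt h1, Nat.choose_eq_zero_of_lt h2,
      Nat.choose_eq_zero_of_lt h3, Nat.choose_eq_zero_of_lt h4]

lemma Mt_top (a b c i j : ℕ) : Mt a b c i j (i+1) = 0 := by
  simp [Mt, Nat.choose_succ_self]

lemma M_closed (a b c : ℕ) : ∀ i j, M a b c i j = ∑ k ∈ Finset.range (i+1), Mt a b c i j k := by
  intro i
  induction i with
  | zero =>
    intro j
    simp [M_zero_row, Mt]
  | succ i ih =>
    intro j
    induction j with
    | zero =>
      rw [M_zero_col, Finset.sum_eq_single 0]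
      · simp [Mt]
      · intro k _ hk
        obtain ⟨k', rfl⟩ : ∃ k', k = k' + 1 := ⟨k - 1, by omega⟩
        have h : i + 1 + 0 - (k' + 1) < i + 1 := by omega
        simp only [Mt, Nat.choose_eq_zero_of_lt h, mul_zero, zero_mul]
      · simp
    | succ j ihj =>
      rw [M_rec, ih j, ih (j+1), ihj]
      have e3 : ∑ k ∈ Finset.range (i+1), Mt a b c i (j+1) k
          = ∑ k ∈ Finset.range (i+1+1), Mt a b c i (j+1) k := by
        rw [Finset.sum_range_succ (fun k => Mt a b c i (j+1) k) (i+1), Mt_top, add_zero]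
      rw [e3,
        Finset.sum_range_succ' (fun k => Mt a b c (i+1) (j+1) k) (i+1),
        Finset.sum_range_succ' (fun k => Mt a b c (i+1) j k) (i+1),
        Finset.sum_range_succ' (fun k => Mt a b c i (j+1) k) (i+1)]
      have hsum : ∑ k ∈ Finset.range (i+1), Mt a b c (i+1) (j+1) (k+1)
          = ∑ k ∈ Finset.range (i+1),
              (a * Mt a b c (i+1) j (k+1) + b * Mt a b c i j k + c * Mt a b c i (j+1) (k+1)) :=
        Finset.sum_congr rfl fun k hk =>
          Mt_key a b c i j k (Nat.lt_succ_iff.mp (Finset.mem_range.mp hk))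
      rw [hsum, Mt_zero, Finset.sum_add_distrib, Finset.sum_add_distrib,
        ← Finset.mul_sum, ← Finset.mul_sum, ← Finset.mul_sum]
      ring

section ZModPart

variable (p a b c : ℕ) [hp : Fact p.Prime]

lemma cast_choose_p_sub_one : ∀ j, j < p → ((Nat.choose (p-1) j : ℕ) : ZMod p) = (-1)^j := by
  intro j
  induction j with
  | zero => intro _; simp
  | succ j ih =>
    intro hj
    have hj' : j < p := by omega
    have h1 : ((j : ZMod p) + 1) ≠ 0 := by
      have : ((j+1 : ℕ) : ZMod p) ≠ 0 := by
        rw [Ne, ZMod.natCast_eq_zero_iff]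
        exact fun hdvd => absurd (Nat.le_of_dvd (by omega) hdvd) (by omega)
      simpa using this
    have h2 := Nat.choose_succ_right_eq (p-1) j
    have h3 : p - 1 - j + (j + 1) = p := by
      have := hp.out.two_le; omega
    have h4 : ((p - 1 - j : ℕ) : ZMod p) = -((j : ZMod p) + 1) := by
      have : ((p - 1 - j : ℕ) : ZMod p) + ((j+1 : ℕ) : ZMod p) = ((p : ℕ) : ZMod p) := by
        rw [← Nat.cast_add, h3]
      rw [ZMod.natCast_self] at this
      push_cast at this ⊢
      linear_combination this
    have h5 : ((Nat.choose (p-1) (j+1) : ℕ) : ZMod p) * ((j : ZMod p) + 1)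
        = (-1)^(j+1) * ((j : ZMod p) + 1) := by
      have := congrArg (fun x : ℕ => (x : ZMod p)) h2
      push_cast at this
      rw [this, ih hj', h4]
      ring
    exact mul_right_cancel₀ h1 h5

lemma M_row_edge : ∀ j, j < p → ((M a b c (p-1) j : ℕ) : ZMod p) = (-1)^j * b^j * c^(p-1-j) := by
  intro j hj
  have h2 := hp.out.two_le
  rw [M_closed]
  rw [show p - 1 + 1 = p by omega]
  push_cast
  rw [Finset.sum_eq_single j]
  · rw [Mt, show p-1+j-j = p-1 by omega, Nat.choose_self, show j - j = 0 by omega]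
    push_cast
    rw [cast_choose_p_sub_one p j hj]
    ring
  · intro k hk hkj
    rcases lt_or_gt_of_ne hkj with hlt | hgt
    · -- k < j : p divides the middle binomial
      have hd : p ∣ Nat.choose (p-1+j-k) (p-1) := by
        apply hp.out.dvd_choose (by omega) (by omega) (by omega)
      rw [Mt]
      push_cast
      rw [show ((Nat.choose (p-1+j-k) (p-1) : ℕ) : ZMod p) = 0 from
        (ZMod.natCast_eq_zero_iff _ _).mpr hd]
      ring
    · -- k > j : binomial is zero
      have hk' : k < p := by simpa using Finset.mem_range.mp hk
      have : p - 1 + j - k < p - 1 := by omega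
      rw [Mt, Nat.choose_eq_zero_of_lt this]
      push_cast
      ring
  · intro h
    exact absurd (Finset.mem_range.mpr hj) h

lemma M_col_edge : ∀ i, i < p → ((M a b c i (p-1) : ℕ) : ZMod p) = (-1)^i * b^i * a^(p-1-i) := by
  intro i hi
  have h2 := hp.out.two_le
  rw [M_closed]
  push_cast
  rw [Finset.sum_eq_single i]
  · rw [Mt, show i+(p-1)-i = p-1 by omega, Nat.choose_self, show i - i = 0 by omega]
    push_cast
    rw [cast_choose_p_sub_one p i hi]
    ring
  · intro k hk hki
    have hklt : k < i := by
      have := Finset.mem_range.mp hk; omega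
    have hd : p ∣ Nat.choose (i+(p-1)-k) i := by
      apply hp.out.dvd_choose (by omega) (by omega) (by omega)
    rw [Mt]
    push_cast
    rw [show ((Nat.choose (i+(p-1)-k) i : ℕ) : ZMod p) = 0 from
      (ZMod.natCast_eq_zero_iff _ _).mpr hd]
    ring
  · intro h
    exact absurd (Finset.mem_range.mpr (by omega)) h

end ZModPart

section ZModPart2

variable (p a b c : ℕ) [hp : Fact p.Prime]

lemma neg_one_pow_p_sub_one : ((-1 : ZMod p))^(p-1) = 1 :=
  ZMod.pow_card_sub_one_eq_one (by
    intro h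
    exact one_ne_zero (by rw [← neg_neg (1 : ZMod p), h, neg_zero]))

lemma M_corner (hb : ¬ p ∣ b) : ((M a b c (p-1) (p-1) : ℕ) : ZMod p) = 1 := by
  have h2 := hp.out.two_le
  rw [M_row_edge p a b c (p-1) (by omega), show p-1-(p-1) = 0 by omega, pow_zero, mul_one,
    neg_one_pow_p_sub_one, one_mul]
  exact ZMod.pow_card_sub_one_eq_one (by
    rw [Ne, ZMod.natCast_eq_zero_iff]; exact hb)

lemma M_edge1 (j : ℕ) (hj0 : 0 < j) (hjp : j < p) :
    (b : ZMod p) * (M a b c (p-1) (j-1) : ℕ) + (c : ZMod p) * (M a b c (p-1) j : ℕ) = 0 := by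
  obtain ⟨j', rfl⟩ : ∃ j', j = j' + 1 := ⟨j - 1, by omega⟩
  rw [show j' + 1 - 1 = j' from rfl, M_row_edge p a b c j' (by omega),
    M_row_edge p a b c (j'+1) hjp]
  have : (c : ZMod p) * (c:ZMod p)^(p-1-(j'+1)) = (c:ZMod p)^(p-1-j') := by
    rw [← pow_succ']
    congr 1
    omega
  rw [show (c : ZMod p) * ((-1)^(j'+1) * b^(j'+1) * c^(p-1-(j'+1)))
      = (-1)^(j'+1) * b^(j'+1) * ((c:ZMod p) * c^(p-1-(j'+1))) by ring, this]
  ring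

lemma M_edge2 (i : ℕ) (hi0 : 0 < i) (hip : i < p) :
    (a : ZMod p) * (M a b c i (p-1) : ℕ) + (b : ZMod p) * (M a b c (i-1) (p-1) : ℕ) = 0 := by
  obtain ⟨i', rfl⟩ : ∃ i', i = i' + 1 := ⟨i - 1, by omega⟩
  rw [show i' + 1 - 1 = i' from rfl, M_col_edge p a b c i' (by omega),
    M_col_edge p a b c (i'+1) hip]
  have : (a : ZMod p) * (a:ZMod p)^(p-1-(i'+1)) = (a:ZMod p)^(p-1-i') := by
    rw [← pow_succ']
    congr 1
    omega
  rw [show (a : ZMod p) * ((-1)^(i'+1) * b^(i'+1) * a^(p-1-(i'+1)))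
      = (-1)^(i'+1) * b^(i'+1) * ((a:ZMod p) * a^(p-1-(i'+1))) by ring, this]
  ring

end ZModPart2

lemma digits_of (p q r x : ℕ) (hp0 : 0 < p) (hr : r < p) (hx : x = r + q * p) :
    x / p = q ∧ x % p = r := by
  subst hx
  constructor
  · rw [Nat.add_mul_div_right _ _ hp0, Nat.div_eq_of_lt hr, Nat.zero_add]
  · rw [Nat.add_mul_mod_self_right, Nat.mod_eq_of_lt hr]

lemma M_lucas (p a b c : ℕ) [hp : Fact p.Prime]
    (ha : ¬ p ∣ a) (hb : ¬ p ∣ b) (hc : ¬ p ∣ c) :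
    ∀ m n : ℕ, ((M a b c m n : ℕ) : ZMod p)
      = ((M a b c (m / p) (n / p) : ℕ) : ZMod p) * ((M a b c (m % p) (n % p) : ℕ) : ZMod p) := by
  have hp0 : 0 < p := hp.out.pos
  have haz : (a : ZMod p) ≠ 0 := by rw [Ne, ZMod.natCast_eq_zero_iff]; exact ha
  have hcz : (c : ZMod p) ≠ 0 := by rw [Ne, ZMod.natCast_eq_zero_iff]; exact hc
  suffices h : ∀ N m n, m + n ≤ N → ((M a b c m n : ℕ) : ZMod p)
      = ((M a b c (m / p) (n / p) : ℕ) : ZMod p) * ((M a b c (m % p) (n % p) : ℕ) : ZMod p) from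
    fun m n => h (m + n) m n le_rfl
  intro N
  induction N with
  | zero =>
    intro m n hmn
    obtain rfl : m = 0 := by omega
    obtain rfl : n = 0 := by omega
    simp [M_zero_row]
  | succ N IH =>
    intro m n hmn
    match m, n with
    | 0, n =>
      rw [M_zero_row, Nat.zero_div, Nat.zero_mod, M_zero_row, M_zero_row]
      push_cast
      conv_lhs => rw [← Nat.div_add_mod n p]
      rw [pow_add, pow_mul, ZMod.pow_card]
    | (m1+1), 0 =>
      rw [M_zero_col, Nat.zero_div, Nat.zero_mod, M_zero_col, M_zero_col]
      push_cast
      conv_lhs => rw [← Nat.div_add_mod (m1+1) p]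
      rw [pow_add, pow_mul, ZMod.pow_card]
    | (m1+1), (n1+1) =>
      obtain ⟨S, hS⟩ : ∃ S, (m1+1)/p = S := ⟨_, rfl⟩
      obtain ⟨i, hi⟩ : ∃ i, (m1+1)%p = i := ⟨_, rfl⟩
      obtain ⟨T, hT⟩ : ∃ T, (n1+1)/p = T := ⟨_, rfl⟩
      obtain ⟨j, hj⟩ : ∃ j, (n1+1)%p = j := ⟨_, rfl⟩
      have hm : i + S * p = m1 + 1 := by rw [← hS, ← hi]; exact Nat.mod_add_div' _ _
      have hn : j + T * p = n1 + 1 := by rw [← hT, ← hj]; exact Nat.mod_add_div' _ _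
      have hip : i < p := hi ▸ Nat.mod_lt _ hp0
      have hjp : j < p := hj ▸ Nat.mod_lt _ hp0
      have I1 := IH (m1+1) n1 (by omega)
      have I2 := IH m1 n1 (by omega)
      have I3 := IH m1 (n1+1) (by omega)
      rw [hS, hi] at I1
      rw [hT, hj] at I3
      rw [hS, hi, hT, hj]
      rcases Nat.eq_zero_or_pos i with hi0 | hi0 <;> rcases Nat.eq_zero_or_pos j with hj0 | hj0
      · -- i = 0, j = 0
        have hSpos : 0 < S := by
          rcases Nat.eq_zero_or_pos S with h | h
          · rw [h] at hm; simp [hi0] at hm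
          · exact h
        have hTpos : 0 < T := by
          rcases Nat.eq_zero_or_pos T with h | h
          · rw [h] at hn; simp [hj0] at hn
          · exact h
        obtain ⟨S', rfl⟩ : ∃ S', S = S' + 1 := ⟨S - 1, by omega⟩
        obtain ⟨T', rfl⟩ : ∃ T', T = T' + 1 := ⟨T - 1, by omega⟩
        have hmul : (S' + 1) * p = S' * p + p := by rw [Nat.succ_mul]
        have hmul' : (T' + 1) * p = T' * p + p := by rw [Nat.succ_mul]
        have dm := digits_of p S' (p-1) m1 hp0 (by omega) (by omega)
        have dn := digits_of p T' (p-1) n1 hp0 (by omega) (by omega)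
        rw [M_rec]
        push_cast
        rw [I1, I2, I3, dm.1, dm.2, dn.1, dn.2, hi0, hj0]
        rw [M_zero_row a b c (p-1), M_zero_col a b c (p-1),
            M_corner p a b c hb, M_rec a b c S' T']
        push_cast
        rw [ZMod.pow_card_sub_one_eq_one haz, ZMod.pow_card_sub_one_eq_one hcz]
        rw [M_zero_row a b c 0, pow_zero]
        push_cast
        ring
      · -- i = 0, j > 0
        have hSpos : 0 < S := by
          rcases Nat.eq_zero_or_pos S with h | h
          · rw [h] at hm; simp [hi0] at hm
          · exact h
        obtain ⟨S', rfl⟩ : ∃ S', S = S' + 1 := ⟨S - 1, by omega⟩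
        have hmul : (S' + 1) * p = S' * p + p := by rw [Nat.succ_mul]
        have dm := digits_of p S' (p-1) m1 hp0 (by omega) (by omega)
        have dn := digits_of p T (j-1) n1 hp0 (by omega) (by omega)
        obtain ⟨j', rfl⟩ : ∃ j', j = j' + 1 := ⟨j - 1, by omega⟩
        rw [M_rec]
        push_cast
        rw [I1, I2, I3, dm.1, dm.2, dn.1, dn.2, hi0]
        rw [show j' + 1 - 1 = j' from rfl]
        have edge := M_edge1 p a b c (j'+1) (by omega) hjp
        rw [show j' + 1 - 1 = j' from rfl] at edge
        rw [M_zero_row a b c j', M_zero_row a b c (j'+1)]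
        push_cast
        linear_combination
          ((M a b c S' T : ℕ) : ZMod p) * edge
          + ((a:ZMod p) * (a:ZMod p)^j' - (a:ZMod p)^(j'+1))
            * ((M a b c (S'+1) T : ℕ) : ZMod p)
      · -- i > 0, j = 0
        have hTpos : 0 < T := by
          rcases Nat.eq_zero_or_pos T with h | h
          · rw [h] at hn; simp [hj0] at hn
          · exact h
        obtain ⟨T', rfl⟩ : ∃ T', T = T' + 1 := ⟨T - 1, by omega⟩
        have hmul' : (T' + 1) * p = T' * p + p := by rw [Nat.succ_mul]
        have dm := digits_of p S (i-1) m1 hp0 (by omega) (by omega)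
        have dn := digits_of p T' (p-1) n1 hp0 (by omega) (by omega)
        obtain ⟨i', rfl⟩ : ∃ i', i = i' + 1 := ⟨i - 1, by omega⟩
        rw [M_rec]
        push_cast
        rw [I1, I2, I3, dm.1, dm.2, dn.1, dn.2, hj0]
        rw [show i' + 1 - 1 = i' from rfl]
        have edge := M_edge2 p a b c (i'+1) (by omega) hip
        rw [show i' + 1 - 1 = i' from rfl] at edge
        rw [M_zero_col a b c i', M_zero_col a b c (i'+1)]
        push_cast
        linear_combination
          ((M a b c S T' : ℕ) : ZMod p) * edge
          + ((c:ZMod p) * (c:ZMod p)^i' - (c:ZMod p)^(i'+1))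
            * ((M a b c S (T'+1) : ℕ) : ZMod p)
      · -- i > 0, j > 0
        have dm := digits_of p S (i-1) m1 hp0 (by omega) (by omega)
        have dn := digits_of p T (j-1) n1 hp0 (by omega) (by omega)
        obtain ⟨i', rfl⟩ : ∃ i', i = i' + 1 := ⟨i - 1, by omega⟩
        obtain ⟨j', rfl⟩ : ∃ j', j = j' + 1 := ⟨j - 1, by omega⟩
        rw [M_rec]
        push_cast
        rw [I1, I2, I3, dm.1, dm.2, dn.1, dn.2]
        rw [show i' + 1 - 1 = i' from rfl, show j' + 1 - 1 = j' from rfl,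
          M_rec a b c i' j']
        push_cast
        ring

lemma M_self_similar_pow (p a b c : ℕ) [hp : Fact p.Prime]
    (ha : ¬ p ∣ a) (hb : ¬ p ∣ b) (hc : ¬ p ∣ c) :
    ∀ k S T i j : ℕ, i < p ^ k → j < p ^ k →
      ((M a b c (S * p ^ k + i) (T * p ^ k + j) : ℕ) : ZMod p)
        = ((M a b c S T : ℕ) : ZMod p) * ((M a b c i j : ℕ) : ZMod p) := by
  have hp0 : 0 < p := hp.out.pos
  intro k
  induction k with
  | zero =>
    intro S T i j hi hj
    obtain rfl : i = 0 := by simpa using hi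
    obtain rfl : j = 0 := by simpa using hj
    have : (M a b c 0 0 : ℕ) = 1 := by rw [M]
    simp [this]
  | succ k ih =>
    intro S T i j hi hj
    obtain ⟨u, hu⟩ : ∃ u, i / p ^ k = u := ⟨_, rfl⟩
    obtain ⟨i', hi'⟩ : ∃ i', i % p ^ k = i' := ⟨_, rfl⟩
    obtain ⟨v, hv⟩ : ∃ v, j / p ^ k = v := ⟨_, rfl⟩
    obtain ⟨j', hj'⟩ : ∃ j', j % p ^ k = j' := ⟨_, rfl⟩
    have hpk : 0 < p ^ k := Nat.pow_pos hp0
    have hieq : i = u * p ^ k + i' := by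
      rw [← hu, ← hi']; exact (Nat.div_add_mod' i (p ^ k)).symm
    have hjeq : j = v * p ^ k + j' := by
      rw [← hv, ← hj']; exact (Nat.div_add_mod' j (p ^ k)).symm
    have hi'lt : i' < p ^ k := hi' ▸ Nat.mod_lt _ hpk
    have hj'lt : j' < p ^ k := hj' ▸ Nat.mod_lt _ hpk
    have hult : u < p := by
      rw [← hu]; apply Nat.div_lt_of_lt_mul; rw [← pow_succ]; exact hi
    have hvlt : v < p := by
      rw [← hv]; apply Nat.div_lt_of_lt_mul; rw [← pow_succ]; exact hj
    have e1 : S * p ^ (k+1) + i = (S * p + u) * p ^ k + i' := by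
      rw [hieq, pow_succ]; ring
    have e2 : T * p ^ (k+1) + j = (T * p + v) * p ^ k + j' := by
      rw [hjeq, pow_succ]; ring
    rw [e1, e2, ih (S*p+u) (T*p+v) i' j' hi'lt hj'lt]
    have dS := digits_of p S u (S*p+u) hp0 hult (by ring)
    have dT := digits_of p T v (T*p+v) hp0 hvlt (by ring)
    rw [M_lucas p a b c ha hb hc (S*p+u) (T*p+v), dS.1, dS.2, dT.1, dT.2]
    rw [hieq, hjeq, ih u v i' j' hi'lt hj'lt]
    ring


/-- Theorem 4.2: If `p` is prime and `a, b, c` are not divisible by `p`, then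
`M` is numerically `p`-self-similar modulo `p`. -/
theorem M_numerically_self_similar (p a b c : ℕ) (hp : p.Prime)
    (ha : ¬ p ∣ a) (hb : ¬ p ∣ b) (hc : ¬ p ∣ c) :
    ∀ s t k i j : ℕ, s < p → t < p → i < p ^ k → j < p ^ k →
      M a b c (s * p ^ k + i) (t * p ^ k + j) ≡ M a b c s t * M a b c i j [MOD p] := by
  haveI : Fact p.Prime := ⟨hp⟩
  intro s t k i j _ _ hi hj
  rw [← ZMod.natCast_eq_natCast_iff]
  push_cast
  exact M_self_similar_pow p a b c ha hb hc k s t i j hi hj
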